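/- Let $m$ be even, $s = m/2$, and $x = (\varepsilon + 1/2)m$ for a fixed small constant $\varepsilon \in (0, 0.1)$ with $\varepsilon m$ an integer. Let $p'_r = \binom{x}{r}\binom{m-x}{x-r}\binom{m}{x}^{-1}$ denote the hypergeometric probability that two independent uniform random $x$-subsets of an $m$-set intersect in exactly $r$ elements. Then for all $k \ge 1$, $p'_{s+k}/p'_s \le B_\varepsilon^k$ where $B_\varepsilon = 4\varepsilon^2/(1-4\varepsilon)$. -/
import Mathlib

lemma key_nat (s e k : ℕ) (h2e : 2 * e ≤ s) :
    (s+e).choose (s+k+1) * (s-e).choose (e-(k+1)) * (s * (s - 2*e)) ≤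
    (s+e).choose (s+k) * (s-e).choose (e-k) * (e * e) := by
  rcases lt_or_ge k e with hk | hk
  · have h1 : (s+e).choose (s+k+1) * (s+k+1) = (s+e).choose (s+k) * (e-k) := by
      have := Nat.choose_succ_right_eq (s+e) (s+k)
      rwa [show s+e-(s+k) = e-k by omega] at this
    have h2 : (s-e).choose (e-k) * (e-k) = (s-e).choose (e-k-1) * (s-2*e+k+1) := by
      have := Nat.choose_succ_right_eq (s-e) (e-k-1)
      rw [show e-k-1+1 = e-k by omega, show s-e-(e-k-1) = s-2*e+k+1 by omega] at this
      exact this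
    have hek1 : e - (k+1) = e - k - 1 := by omega
    have hc : (s+e).choose (s+k+1) * (s-e).choose (e-(k+1)) * ((s+k+1) * (s-2*e+k+1))
        = (s+e).choose (s+k) * (s-e).choose (e-k) * ((e-k) * (e-k)) := by
      rw [hek1]
      calc (s+e).choose (s+k+1) * (s-e).choose (e-k-1) * ((s+k+1) * (s-2*e+k+1))
          = ((s+e).choose (s+k+1) * (s+k+1)) * ((s-e).choose (e-k-1) * (s-2*e+k+1)) := by
            ring
        _ = ((s+e).choose (s+k) * (e-k)) * ((s-e).choose (e-k) * (e-k)) := by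
            rw [h1, ← h2]
        _ = (s+e).choose (s+k) * (s-e).choose (e-k) * ((e-k) * (e-k)) := by ring
    calc (s+e).choose (s+k+1) * (s-e).choose (e-(k+1)) * (s * (s - 2*e))
        ≤ (s+e).choose (s+k+1) * (s-e).choose (e-(k+1)) * ((s+k+1) * (s-2*e+k+1)) := by
          apply Nat.mul_le_mul_left
          exact Nat.mul_le_mul (by omega) (by omega)
      _ = (s+e).choose (s+k) * (s-e).choose (e-k) * ((e-k) * (e-k)) := hc
      _ ≤ (s+e).choose (s+k) * (s-e).choose (e-k) * (e * e) := by
          apply Nat.mul_le_mul_left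
          exact Nat.mul_le_mul (by omega) (by omega)
  · have h0 : (s+e).choose (s+k+1) = 0 := Nat.choose_eq_zero_of_lt (by omega)
    simp [h0]

/-- Hypergeometric ratio bound: with `m = 2s` even, `x = (ε + 1/2)m` for `ε ∈ (0, 0.1)`
(with `εm = e` an integer), and `p'_r = C(x,r)·C(m-x, x-r)/C(m,x)` the probability that two
independent uniform `x`-subsets of an `m`-set meet in exactly `r` elements, one has
`p'_{s+k}/p'_s ≤ B_ε^k` for all `k ≥ 1`, where `B_ε = 4ε²/(1-4ε)`. -/
theorem stmt_11 (m s x e : ℕ) (ε : ℝ) (hm : m = 2 * s) (hs : 0 < s)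
    (hε : ε ∈ Set.Ioo (0 : ℝ) 0.1) (he : (e : ℝ) = ε * m) (hx : x = s + e) :
    ∀ k : ℕ, 1 ≤ k →
      (((x.choose (s + k) : ℝ) * ((m - x).choose (x - (s + k)) : ℝ)) / (m.choose x : ℝ)) /
        (((x.choose s : ℝ) * ((m - x).choose (x - s) : ℝ)) / (m.choose x : ℝ)) ≤
      (4 * ε ^ 2 / (1 - 4 * ε)) ^ k := by
  obtain ⟨hε0, hε1⟩ := hε
  have hsR : (1:ℝ) ≤ (s:ℕ) := by exact_mod_cast hs
  have hmR : (m:ℝ) = 2 * s := by rw [hm]; push_cast; ring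
  have heR : (e:ℝ) = 2 * ε * s := by rw [he, hmR]; ring
  have h2eR : (2 * e : ℝ) < s := by
    have : (0.1:ℝ) = 1/10 := by norm_num
    nlinarith [heR, hsR]
  have h2e : 2 * e < s := by exact_mod_cast (by push_cast; linarith : ((2*e : ℕ):ℝ) < s)
  have h4ε : 1 - 4 * ε > 0 := by nlinarith [heR]
  set B : ℝ := 4 * ε ^ 2 / (1 - 4 * ε) with hB
  have hs2e : ((s - 2*e : ℕ):ℝ) = (s:ℝ) - 2 * e := by
    push_cast [Nat.cast_sub (by omega : 2*e ≤ s)]; ring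
  have hBeq : B = (e:ℝ)^2 / ((s:ℝ) * ((s:ℝ) - 2 * e)) := by
    rw [hB, heR]
    have hsne : (s:ℝ) ≠ 0 := by linarith
    have h1 : (s:ℝ) - 2 * (2*ε*s) = s * (1 - 4*ε) := by ring
    rw [h1]
    field_simp
    ring
  have hB0 : 0 ≤ B := by
    rw [hB]; positivity
  -- the step inequality over ℝ
  have step : ∀ k : ℕ,
      (((s+e).choose (s+k+1) : ℝ) * ((s-e).choose (e-(k+1)) : ℝ)) ≤
      B * (((s+e).choose (s+k) : ℝ) * ((s-e).choose (e-k) : ℝ)) := by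
    intro k
    have hnat := key_nat s e k (by omega)
    have hR : (((s+e).choose (s+k+1) : ℝ) * ((s-e).choose (e-(k+1)) : ℝ)) * ((s:ℝ) * ((s:ℝ) - 2*e))
        ≤ (((s+e).choose (s+k) : ℝ) * ((s-e).choose (e-k) : ℝ)) * ((e:ℝ) * e) := by
      have := (Nat.cast_le (α := ℝ)).2 hnat
      push_cast [Nat.cast_sub (by omega : 2*e ≤ s)] at this
      convert this using 2 <;> push_cast <;> ring
    have hpos : (0:ℝ) < (s:ℝ) * ((s:ℝ) - 2*e) := by
      apply mul_pos (by linarith)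
      linarith
    rw [hBeq]
    rw [div_mul_eq_mul_div, le_div_iff₀ hpos]
    nlinarith [hR]
  -- main induction: numerator_k ≤ B^k * numerator_0
  have main : ∀ k : ℕ,
      (((s+e).choose (s+k) : ℝ) * ((s-e).choose (e-k) : ℝ)) ≤
      B ^ k * (((s+e).choose s : ℝ) * ((s-e).choose e : ℝ)) := by
    intro k
    induction k with
    | zero => simp
    | succ n ih =>
      calc (((s+e).choose (s+n+1) : ℝ) * ((s-e).choose (e-(n+1)) : ℝ))
          ≤ B * (((s+e).choose (s+n) : ℝ) * ((s-e).choose (e-n) : ℝ)) := step n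
        _ ≤ B * (B ^ n * (((s+e).choose s : ℝ) * ((s-e).choose e : ℝ))) := by
            exact mul_le_mul_of_nonneg_left ih hB0
        _ = B ^ (n+1) * (((s+e).choose s : ℝ) * ((s-e).choose e : ℝ)) := by ring
  intro k hk
  have hmx : m - x = s - e := by omega
  have hxs : x - s = e := by omega
  have hxsk : x - (s + k) = e - k := by omega
  have hxe : x = s + e := hx
  rw [hmx, hxs, hxsk, hxe]
  -- positivity of denominator pieces
  have hq0 : (0:ℝ) < ((s+e).choose s : ℝ) * ((s-e).choose e : ℝ) := by
    have h1 : 0 < (s+e).choose s := Nat.choose_pos (by omega)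
    have h2 : 0 < (s-e).choose e := Nat.choose_pos (by omega)
    positivity
  have hC : (0:ℝ) < (m.choose x : ℝ) := by
    have : 0 < m.choose x := Nat.choose_pos (by omega)
    exact_mod_cast this
  rw [hxe] at hC
  rw [div_div_div_cancel_right₀ (ne_of_gt hC)]
  rw [div_le_iff₀ hq0]
  have := main k
  calc (((s+e).choose (s+k) : ℝ) * ((s-e).choose (e-k) : ℝ))
      ≤ B ^ k * (((s+e).choose s : ℝ) * ((s-e).choose e : ℝ)) := main k
    _ = (4 * ε ^ 2 / (1 - 4 * ε)) ^ k * (((s+e).choose s : ℝ) * ((s-e).choose e : ℝ)) := by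
        rw [hB]
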